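/- Let K be a commutative ring and m ≥ 2 an integer. In the free Lie algebra over K on generators ξ₁,…,ξ_m, the path sequence ρ₁ = [ξ₁,ξ₂], ρ₂ = [ξ₂,ξ₃], …, ρ_{m−1} = [ξ_{m−1},ξ_m] is strongly free. -/

import Mathlib

open LieSubmodule

section StronglyFree

attribute [local instance 100] LieRing.ofAssociativeRing

variable (K : Type*) [CommRing K] (L : Type*) [LieRing L] [LieAlgebra K L]

/-- The derived ideal `[I, I]` of a Lie ideal `I`, viewed as a Lie submodule (for the
ambient `L`-action) of `I`. -/
def derivedLieSubmodule (I : LieIdeal K L) : LieSubmodule K L I :=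
  lieSpan K L {z : I | ∃ x y : I, (z : L) = ⁅(x : L), (y : L)⁆}

/-- The abelianization `I/[I,I]` of a Lie ideal `I`. -/
abbrev LieIdealAb (I : LieIdeal K L) : Type _ := I ⧸ derivedLieSubmodule K L I

theorem lie_mk_eq_zero (I : LieIdeal K L) {x : L} (hx : x ∈ I) (m : I) :
    ⁅x, (LieSubmodule.Quotient.mk (N := derivedLieSubmodule K L I) m)⁆ = 0 := by
  have : ⁅x, (LieSubmodule.Quotient.mk (N := derivedLieSubmodule K L I) m)⁆
      = LieSubmodule.Quotient.mk (N := derivedLieSubmodule K L I) ⁅x, m⁆ := rfl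
  rw [this, LieSubmodule.Quotient.mk_eq_zero']
  exact subset_lieSpan ⟨⟨x, hx⟩, m, rfl⟩

/-- The action of the quotient Lie algebra `L ⧸ I` on the abelianization `I/[I,I]`. -/
noncomputable def abelianizationAction (I : LieIdeal K L) :
    (L ⧸ I) →ₗ⁅K⁆ Module.End K (LieIdealAb K L I) :=
  { (Submodule.liftQ I.toSubmodule
      (LieModule.toEnd K L (LieIdealAb K L I)).toLinearMap (by
        intro x hx
        ext m
        induction m using Quotient.inductionOn' with
        | h m =>
          exact lie_mk_eq_zero K L I hx m)) with
    map_lie' := by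
      intro x y
      induction x using Quotient.inductionOn' with
      | h x =>
      induction y using Quotient.inductionOn' with
      | h y =>
        have hx : (Quotient.mk'' x : L ⧸ I) = LieSubmodule.Quotient.mk (N := I) x := rfl
        have hy : (Quotient.mk'' y : L ⧸ I) = LieSubmodule.Quotient.mk (N := I) y := rfl
        simp only [hx, hy, ← LieSubmodule.Quotient.mk_bracket]
        change (LieModule.toEnd K L (LieIdealAb K L I)) ⁅x, y⁆
          = ⁅(LieModule.toEnd K L (LieIdealAb K L I)) x,
              (LieModule.toEnd K L (LieIdealAb K L I)) y⁆
        exact LieHom.map_lie _ x y }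

/-- `I/[I,I]` as a module over the universal enveloping algebra of `L ⧸ I`. -/
noncomputable instance lieIdealAbModule (I : LieIdeal K L) :
    Module (UniversalEnvelopingAlgebra K (L ⧸ I)) (LieIdealAb K L I) :=
  Module.compHom (LieIdealAb K L I)
    (UniversalEnvelopingAlgebra.lift K (abelianizationAction K L I) :
      UniversalEnvelopingAlgebra K (L ⧸ I) →ₐ[K]
        Module.End K (LieIdealAb K L I)).toRingHom

/-- A family `ρ` of elements of a Lie algebra `L` over `K` is *strongly free* if,
denoting by `𝔯` the Lie ideal generated by the `ρ i`, by `𝔤 = L ⧸ 𝔯` and by `U𝔤` the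
universal enveloping algebra of `𝔤`, the `K`-module `U𝔤` is torsion free and the
abelianization `𝔯/[𝔯,𝔯]` is a free `U𝔤`-module with basis the images of the `ρ i`. -/
def IsStronglyFree {ι : Type*} (ρ : ι → L) : Prop :=
  Submodule.torsion K (UniversalEnvelopingAlgebra K (L ⧸ lieSpan K L (Set.range ρ))) = ⊥ ∧
  ∃ b : Module.Basis ι (UniversalEnvelopingAlgebra K (L ⧸ lieSpan K L (Set.range ρ)))
      (LieIdealAb K L (lieSpan K L (Set.range ρ))),
    ∀ i, b i = LieSubmodule.Quotient.mk
      (⟨ρ i, subset_lieSpan (Set.mem_range_self i)⟩ : lieSpan K L (Set.range ρ))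

end StronglyFree

attribute [local instance 100] LieRing.ofAssociativeRing


namespace PathSF

variable {m : ℕ}

/-- Adjacent letters (these are the ones that commute). -/
def Adj (i j : Fin m) : Prop := (i : ℕ) + 1 = (j : ℕ) ∨ (j : ℕ) + 1 = (i : ℕ)

/-- The commutation relation: adjacent letters commute. -/
def swapRel (m : ℕ) : FreeMonoid (Fin m) → FreeMonoid (Fin m) → Prop := fun u v =>
  ∃ i j : Fin m, (i : ℕ) + 1 = (j : ℕ) ∧ u = .of i * .of j ∧ v = .of j * .of i

abbrev TraceCon (m : ℕ) : Con (FreeMonoid (Fin m)) := conGen (swapRel m)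

abbrev TraceMon (m : ℕ) := (TraceCon m).Quotient

lemma traceCon_iff {u v : FreeMonoid (Fin m)} :
    TraceCon m u v ↔ ConGen.Rel (swapRel m) u v := Iff.rfl

lemma count_invar {u v : FreeMonoid (Fin m)} (h : TraceCon m u v) (i : Fin m) :
    u.toList.count i = v.toList.count i := by
  rw [traceCon_iff] at h
  induction h with
  | of x y hxy =>
    obtain ⟨a, b, hab, rfl, rfl⟩ := hxy
    simp [List.count_cons]
    omega
  | refl => rfl
  | symm _ ih => exact ih.symm
  | trans _ _ ih1 ih2 => exact ih1.trans ih2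
  | mul _ _ ih1 ih2 => simp only [FreeMonoid.toList_mul, List.count_append, ih1, ih2]

lemma filter_invar {u v : FreeMonoid (Fin m)} (h : TraceCon m u v) (p : Fin m → Bool)
    (hp : ∀ a b : Fin m, (a : ℕ) + 1 = (b : ℕ) → p a = true → p b = true → False) :
    u.toList.filter p = v.toList.filter p := by
  rw [traceCon_iff] at h
  induction h with
  | of x y hxy =>
    obtain ⟨a, b, hab, rfl, rfl⟩ := hxy
    cases hpa : p a <;> cases hpb : p b <;>
      simp [List.filter_cons, hpa, hpb]
    exact absurd (hp a b hab hpa hpb) not_false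
  | refl => rfl
  | symm _ ih => exact ih.symm
  | trans _ _ ih1 ih2 => exact ih1.trans ih2
  | mul _ _ ih1 ih2 => simp only [FreeMonoid.toList_mul, List.filter_append, ih1, ih2]

lemma exists_first {a : Fin m} {v : List (Fin m)} (h : a ∈ v) :
    ∃ w w', v = w ++ a :: w' ∧ ∀ b ∈ w, b ≠ a := by
  induction v with
  | nil => simp at h
  | cons c v' ih =>
    by_cases hc : c = a
    · exact ⟨[], v', by rw [hc]; rfl, by simp⟩
    · have h' : a ∈ v' := by
        rcases List.mem_cons.mp h with h | h
        · exact absurd h.symm hc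
        · exact h
      obtain ⟨w, w', rfl, hw⟩ := ih h'
      exact ⟨c :: w, w', rfl, by
        intro b hb
        rcases List.mem_cons.mp hb with rfl | hb
        · exact hc
        · exact hw b hb⟩

lemma swap_step {a b : Fin m} (h : Adj b a) :
    TraceCon m (.ofList [b, a]) (.ofList [a, b]) := by
  rcases h with h | h
  · exact ConGen.Rel.of _ _ ⟨b, a, h, rfl, rfl⟩
  · exact (TraceCon m).symm (ConGen.Rel.of _ _ ⟨a, b, h, rfl, rfl⟩)

lemma move_front (a : Fin m) (w w' : List (Fin m)) (hw : ∀ b ∈ w, Adj b a) :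
    TraceCon m (.ofList (w ++ a :: w')) (.ofList (a :: (w ++ w'))) := by
  induction w with
  | nil => exact (TraceCon m).refl _
  | cons b w₂ ih =>
    have ih' := ih (fun c hc => hw c (List.mem_cons_of_mem _ hc))
    have h1 : TraceCon m (.ofList ((b :: w₂) ++ a :: w')) (.ofList (b :: a :: (w₂ ++ w'))) := by
      have : TraceCon m (.ofList [b] * .ofList (w₂ ++ a :: w'))
          (.ofList [b] * .ofList (a :: (w₂ ++ w'))) :=
        (TraceCon m).mul ((TraceCon m).refl _) ih'
      simpa [← FreeMonoid.ofList_append] using this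
    refine h1.trans ?_
    have h2 : TraceCon m (.ofList [b, a] * .ofList (w₂ ++ w'))
        (.ofList [a, b] * .ofList (w₂ ++ w')) :=
      (TraceCon m).mul (swap_step (hw b List.mem_cons_self)) ((TraceCon m).refl _)
    simpa [← FreeMonoid.ofList_append, mul_assoc, traceCon_iff] using h2

end PathSF

namespace PathSF

variable {m : ℕ}

lemma adj_symm {i j : Fin m} : Adj i j ↔ Adj j i := or_comm

lemma mk_hp {i j : Fin m} (hnadj : ¬ Adj i j) :
    ∀ a b : Fin m, (a : ℕ) + 1 = (b : ℕ) →
      (a == i || a == j) = true → (b == i || b == j) = true → False := by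
  intro a b hab hpa hpb
  simp only [Bool.or_eq_true, beq_iff_eq] at hpa hpb
  rcases hpa with rfl | rfl <;> rcases hpb with rfl | rfl
  · omega
  · exact hnadj (Or.inl hab)
  · exact hnadj (Or.inr hab)
  · omega

lemma projections_determine (n : ℕ) : ∀ (u v : List (Fin m)), u.length = n →
    (∀ i, u.count i = v.count i) →
    (∀ i j : Fin m, ¬ Adj i j →
      u.filter (fun x => x == i || x == j) = v.filter (fun x => x == i || x == j)) →
    TraceCon m (.ofList u) (.ofList v) := by
  induction n with
  | zero =>
    intro u v hlen hc _
    have hu : u = [] := List.eq_nil_of_length_eq_zero hlen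
    subst hu
    cases v with
    | nil => exact (TraceCon m).refl _
    | cons c v' =>
      have := hc c
      simp [List.count_cons_self] at this
  | succ n ih =>
    intro u v hlen hc hF
    cases u with
    | nil => simp at hlen
    | cons a u' =>
      have ha : a ∈ v := by
        have h1 := hc a
        simp [List.count_cons_self] at h1
        have : 0 < v.count a := by omega
        exact List.count_pos_iff.mp this
      obtain ⟨w, w', rfl, hwne⟩ := exists_first ha
      have hadj : ∀ b ∈ w, Adj b a := by
        intro b hb
        by_contra hnadj
        have hne : b ≠ a := hwne b hb
        have hnadj' : ¬ Adj a b := fun h => hnadj (adj_symm.mp h)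
        have hf := hF a b hnadj'
        set p : Fin m → Bool := fun x => x == a || x == b with hp
        have hfu : (a :: u').filter p = a :: u'.filter p := by
          simp [hp, List.filter_cons]
        have hfv : (w ++ a :: w').filter p = w.filter p ++ a :: w'.filter p := by
          simp [hp, List.filter_append, List.filter_cons]
        have hbw : b ∈ w.filter p := by
          refine List.mem_filter.mpr ⟨hb, ?_⟩
          simp [hp]
        cases hfw : w.filter p with
        | nil => rw [hfw] at hbw; simp at hbw
        | cons d t =>
          have hd : d ∈ w.filter p := by rw [hfw]; exact List.mem_cons_self
          have hdw := List.mem_filter.mp hd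
          have hdb : d = b := by
            have := hdw.2
            simp only [hp, Bool.or_eq_true, beq_iff_eq] at this
            rcases this with rfl | rfl
            · exact absurd rfl (hwne d hdw.1)
            · rfl
          rw [hfu, hfv, hfw] at hf
          have : a = d := by
            have := List.head_eq_of_cons_eq hf
            exact this
          exact hne (by rw [← hdb, ← this])
      have hmove := move_front a w w' hadj
      have hcount' : ∀ i, u'.count i = (w ++ w').count i := by
        intro i
        have h1 := hc i
        have h2 := count_invar hmove i
        simp only [FreeMonoid.toList_ofList] at h2
        rw [h2] at h1
        simp [List.count_cons, List.count_append] at h1 ⊢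
        omega
      have hF' : ∀ i j : Fin m, ¬ Adj i j →
          u'.filter (fun x => x == i || x == j) = (w ++ w').filter (fun x => x == i || x == j) := by
        intro i j hnadj
        have h1 := hF i j hnadj
        have h2 := filter_invar hmove _ (mk_hp hnadj)
        simp only [FreeMonoid.toList_ofList] at h2
        rw [h2] at h1
        set p : Fin m → Bool := fun x => x == i || x == j
        cases hpa : p a
        · simpa [List.filter_cons, hpa] using h1
        · rw [List.filter_cons, List.filter_cons, hpa] at h1
          simpa using List.tail_eq_of_cons_eq h1
      have htail : TraceCon m (.ofList u') (.ofList (w ++ w')) :=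
        ih u' (w ++ w') (by simpa using hlen) hcount' hF'
      have hhead : TraceCon m (.ofList (a :: u')) (.ofList (a :: (w ++ w'))) := by
        have : TraceCon m (.ofList [a] * .ofList u') (.ofList [a] * .ofList (w ++ w')) :=
          (TraceCon m).mul ((TraceCon m).refl _) htail
        simpa [← FreeMonoid.ofList_append] using this
      exact hhead.trans ((TraceCon m).symm hmove)

/-- Right cancellation by a generator in the trace monoid, at the level of words. -/
lemma cancel_right_word (u v : FreeMonoid (Fin m)) (i : Fin m)
    (h : TraceCon m (u * .of i) (v * .of i)) : TraceCon m u v := by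
  have hc : ∀ j, u.toList.count j = v.toList.count j := by
    intro j
    have := count_invar h j
    simp only [FreeMonoid.toList_mul, List.count_append] at this
    omega
  have hF : ∀ a b : Fin m, ¬ Adj a b →
      u.toList.filter (fun x => x == a || x == b) = v.toList.filter (fun x => x == a || x == b) := by
    intro a b hnadj
    have := filter_invar h _ (mk_hp hnadj)
    simp only [FreeMonoid.toList_mul, List.filter_append] at this
    exact List.append_cancel_right this
  have := projections_determine u.toList.length u.toList v.toList rfl hc hF
  simpa using this

/-- Right cancellation by a generator in the trace monoid. -/
lemma cancel_right (s t : TraceMon m) (i : Fin m)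
    (h : s * ((FreeMonoid.of i : FreeMonoid (Fin m)) : TraceMon m)
       = t * ((FreeMonoid.of i : FreeMonoid (Fin m)) : TraceMon m)) : s = t := by
  induction s using Con.induction_on with
  | H u =>
    induction t using Con.induction_on with
    | H v =>
      rw [← Con.coe_mul, ← Con.coe_mul, Con.eq] at h
      exact (Con.eq _).mpr (cancel_right_word u v i h)

end PathSF
namespace PathSF

section Defs
variable (K : Type*) [CommRing K] (m : ℕ)

/-- letter k of a path relation -/
def aIdx {m : ℕ} (k : Fin (m - 1)) : Fin m := ⟨k, by omega⟩
/-- letter k+1 of a path relation -/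
def bIdx {m : ℕ} (k : Fin (m - 1)) : Fin m := ⟨(k : ℕ) + 1, by omega⟩

/-- the path relations -/
noncomputable def pathRho : Fin (m - 1) → FreeLieAlgebra K (Fin m) := fun k =>
  ⁅FreeLieAlgebra.of K (aIdx k), FreeLieAlgebra.of K (bIdx k)⁆

noncomputable abbrev RI : LieIdeal K (FreeLieAlgebra K (Fin m)) :=
  LieSubmodule.lieSpan K _ (Set.range (pathRho K m))

abbrev GG := FreeLieAlgebra K (Fin m) ⧸ RI K m

abbrev UA := UniversalEnvelopingAlgebra K (GG K m)

/-- quotient map as a Lie algebra hom -/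
noncomputable def gmk : FreeLieAlgebra K (Fin m) →ₗ⁅K⁆ GG K m :=
  { (RI K m).toSubmodule.mkQ with
    map_lie' := by
      intro x y
      show LieSubmodule.Quotient.mk (N := RI K m) ⁅x, y⁆ = ⁅_, _⁆
      exact LieSubmodule.Quotient.mk_bracket (RI K m) x y }

lemma gmk_apply (x : FreeLieAlgebra K (Fin m)) :
    gmk K m x = LieSubmodule.Quotient.mk (N := RI K m) x := rfl

noncomputable def piA : FreeLieAlgebra K (Fin m) →ₗ⁅K⁆ UA K m :=
  (UniversalEnvelopingAlgebra.ι K).comp (gmk K m)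

noncomputable def gElem (i : Fin m) : UA K m := piA K m (FreeLieAlgebra.of K i)

lemma piA_rho (k : Fin (m - 1)) : piA K m (pathRho K m k) = 0 := by
  show UniversalEnvelopingAlgebra.ι K (gmk K m (pathRho K m k)) = 0
  have h : gmk K m (pathRho K m k) = 0 := by
    rw [gmk_apply, LieSubmodule.Quotient.mk_eq_zero']
    exact LieSubmodule.subset_lieSpan (Set.mem_range_self k)
  rw [h]; exact map_zero _

lemma g_comm {i j : Fin m} (hij : (i : ℕ) + 1 = (j : ℕ)) :
    gElem K m i * gElem K m j = gElem K m j * gElem K m i := by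
  have hk : (i : ℕ) < m - 1 := by
    have := j.isLt; omega
  set k : Fin (m - 1) := ⟨i, hk⟩ with hkdef
  have ha : aIdx k = i := rfl
  have hb : bIdx k = j := by
    apply Fin.ext; exact hij
  have h0 : ⁅gElem K m i, gElem K m j⁆ = (0 : UA K m) := by
    have : ⁅gElem K m i, gElem K m j⁆ = piA K m (pathRho K m k) := by
      rw [pathRho, ha, hb, LieHom.map_lie]; rfl
    rw [this, piA_rho]
  rw [Ring.lie_def] at h0
  exact sub_eq_zero.mp h0

end Defs
end PathSF

namespace PathSF
section Maps
variable (K : Type*) [CommRing K] (m : ℕ)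

abbrev MA := MonoidAlgebra K (TraceMon m)

def qOf {m : ℕ} (i : Fin m) : TraceMon m := ((FreeMonoid.of i : FreeMonoid (Fin m)) : TraceMon m)

lemma qOf_comm (k : Fin (m - 1)) :
    qOf (aIdx k) * qOf (bIdx k) = qOf (bIdx k) * qOf (aIdx k) := by
  simp only [qOf]
  rw [← Con.coe_mul, ← Con.coe_mul]
  exact (Con.eq _).mpr (ConGen.Rel.of _ _ ⟨aIdx k, bIdx k, rfl, rfl, rfl⟩)

/-- The Lie algebra map from the free Lie algebra to the trace monoid algebra. -/
noncomputable def eL : FreeLieAlgebra K (Fin m) →ₗ⁅K⁆ MA K m :=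
  FreeLieAlgebra.lift K (fun i => (MonoidAlgebra.of K (TraceMon m) (qOf i) : MA K m))

lemma eL_rho (k : Fin (m - 1)) : eL K m (pathRho K m k) = 0 := by
  rw [pathRho, LieHom.map_lie, eL, FreeLieAlgebra.lift_of_apply, FreeLieAlgebra.lift_of_apply,
    Ring.lie_def]
  rw [MonoidAlgebra.of_apply, MonoidAlgebra.of_apply, MonoidAlgebra.single_mul_single,
    MonoidAlgebra.single_mul_single, qOf_comm, sub_self]

lemma RI_le_ker_eL : RI K m ≤ (eL K m).ker := by
  rw [LieSubmodule.lieSpan_le]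
  rintro x ⟨k, rfl⟩
  rw [SetLike.mem_coe, LieHom.mem_ker]
  exact eL_rho K m k

/-- descend to the quotient Lie algebra -/
noncomputable def eG : GG K m →ₗ⁅K⁆ MA K m :=
  { Submodule.liftQ (RI K m).toSubmodule (eL K m).toLinearMap
      (fun x hx => LinearMap.mem_ker.mpr (LieHom.mem_ker.mp (RI_le_ker_eL K m hx))) with
    map_lie' := by
      intro x y
      obtain ⟨x, rfl⟩ := Submodule.Quotient.mk_surjective (RI K m).toSubmodule x
      obtain ⟨y, rfl⟩ := Submodule.Quotient.mk_surjective (RI K m).toSubmodule y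
      have hx : (Submodule.Quotient.mk x : GG K m) = gmk K m x := rfl
      have hy : (Submodule.Quotient.mk y : GG K m) = gmk K m y := rfl
      rw [hx, hy, ← LieHom.map_lie (gmk K m)]
      show Submodule.liftQ _ _ _ (Submodule.Quotient.mk _) = ⁅Submodule.liftQ _ _ _
        (Submodule.Quotient.mk _), Submodule.liftQ _ _ _ (Submodule.Quotient.mk _)⁆
      rw [Submodule.liftQ_apply, Submodule.liftQ_apply, Submodule.liftQ_apply]
      exact (eL K m).map_lie x y }

lemma eG_gmk (x : FreeLieAlgebra K (Fin m)) : eG K m (gmk K m x) = eL K m x := rfl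

noncomputable def eA : UA K m →ₐ[K] MA K m :=
  UniversalEnvelopingAlgebra.lift K (eG K m)

lemma eA_pi (x : FreeLieAlgebra K (Fin m)) : eA K m (piA K m x) = eL K m x := by
  show eA K m (UniversalEnvelopingAlgebra.ι K (gmk K m x)) = _
  rw [eA, UniversalEnvelopingAlgebra.lift_ι_apply]
  rfl

lemma eA_g (i : Fin m) : eA K m (gElem K m i) = MonoidAlgebra.single (qOf i) 1 := by
  rw [gElem, eA_pi, eL, FreeLieAlgebra.lift_of_apply]
  rfl

/-- monoid hom from the free monoid to `UA` -/
noncomputable def toUAmon : FreeMonoid (Fin m) →* UA K m := FreeMonoid.lift (gElem K m)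

lemma toUAmon_rel : TraceCon m ≤ Con.ker (toUAmon K m) := by
  apply Con.conGen_le.mpr
  rintro x y ⟨i, j, hij, rfl, rfl⟩
  show toUAmon K m _ = toUAmon K m _
  rw [map_mul, map_mul, toUAmon, FreeMonoid.lift_eval_of, FreeMonoid.lift_eval_of]
  exact g_comm K m hij

noncomputable def fMon : TraceMon m →* UA K m := Con.lift _ (toUAmon K m) (toUAmon_rel K m)

noncomputable def fA : MA K m →ₐ[K] UA K m := MonoidAlgebra.lift K (UA K m) (TraceMon m) (fMon K m)

lemma fA_single (i : Fin m) : fA K m (MonoidAlgebra.single (qOf i) 1) = gElem K m i := by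
  rw [fA]
  have : MonoidAlgebra.single (qOf i) (1 : K) = MonoidAlgebra.of K (TraceMon m) (qOf i) := rfl
  rw [this, MonoidAlgebra.lift_of]
  show toUAmon K m (FreeMonoid.of i) = _
  rw [toUAmon, FreeMonoid.lift_eval_of]

lemma fA_eA_pi (x : FreeLieAlgebra K (Fin m)) : fA K m (eA K m (piA K m x)) = piA K m x := by
  have h : ((fA K m).toLieHom.comp ((eA K m).toLieHom.comp (piA K m)) : _ →ₗ⁅K⁆ _)
      = piA K m := by
    apply FreeLieAlgebra.hom_ext
    intro i
    show fA K m (eA K m (piA K m (FreeLieAlgebra.of K i))) = piA K m (FreeLieAlgebra.of K i)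
    rw [show piA K m (FreeLieAlgebra.of K i) = gElem K m i from rfl, eA_g, fA_single]
  exact LieHom.congr_fun h x

lemma fA_eA (u : UA K m) : fA K m (eA K m u) = u := by
  have h : (fA K m).comp (eA K m) = AlgHom.id K (UA K m) := by
    apply UniversalEnvelopingAlgebra.hom_ext
    apply LieHom.ext
    intro x
    obtain ⟨x, rfl⟩ := Submodule.Quotient.mk_surjective (RI K m).toSubmodule x
    show fA K m (eA K m (UniversalEnvelopingAlgebra.ι K (gmk K m x)))
      = UniversalEnvelopingAlgebra.ι K (gmk K m x)
    exact fA_eA_pi K m x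
  exact AlgHom.congr_fun h u

lemma eA_inj : Function.Injective (eA K m) :=
  Function.LeftInverse.injective (fA_eA K m)

/-- `UA` is torsion-free over `K`. -/
lemma torsion_UA : Submodule.torsion K (UA K m) = ⊥ := by
  rw [Submodule.eq_bot_iff]
  rintro x ⟨c, hc⟩
  have hc' : (c : K) • x = 0 := hc
  have h1 : (c : K) • eA K m x = 0 := by
    have := map_smul (eA K m).toLinearMap (c : K) x
    simp only [AlgHom.toLinearMap_apply] at this
    rw [← this, hc', map_zero]
  have h2 : eA K m x = 0 := by
    apply MonoidAlgebra.ext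
    ext q
    have : (c : K) • (eA K m x).coeff q = 0 := by
      calc (c : K) • (eA K m x).coeff q = ((c : K) • eA K m x).coeff q := (MonoidAlgebra.coeff_smul_apply _ _ _).symm
      _ = 0 := by rw [h1]; rfl
    have hreg : (eA K m x).coeff q * (c : K) = 0 := by
      rw [mul_comm]; exact this
    exact c.2.2 _ hreg
  apply eA_inj K m
  rw [h2, map_zero]

/-- right multiplication by a generator is injective on `UA`. -/
lemma g_reg (i : Fin m) (c : UA K m) (h : c * gElem K m i = 0) : c = 0 := by
  have h1 : eA K m c * MonoidAlgebra.single (qOf i) 1 = 0 := by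
    rw [← eA_g, ← map_mul, h, map_zero]
  have h2 : eA K m c = 0 := by
    apply MonoidAlgebra.ext
    ext s
    have hinj : ∀ a : TraceMon m, a * qOf i = s * qOf i ↔ a = s := by
      intro a
      constructor
      · intro hh
        induction a using Con.induction_on with
        | H u =>
          induction s using Con.induction_on with
          | H v => exact cancel_right _ _ i hh
      · rintro rfl; rfl
    have := MonoidAlgebra.coeff_mul_single_eq_coeff_mul (x := eA K m c) (r := (1:K)) (m := qOf i)
      (m₁ := s * qOf i) s (fun a _ => hinj a)
    rw [h1] at this
    simpa using this.symm
  apply eA_inj K m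
  rw [h2, map_zero]

end Maps
end PathSF

namespace PathSF
section Magnus
variable (K : Type*) [CommRing K] (m : ℕ)

abbrev MM := Fin m →₀ UA K m

/-- the augmentation (counit) of the enveloping algebra -/
noncomputable def epsA : UA K m →ₐ[K] K :=
  UniversalEnvelopingAlgebra.lift K (0 : GG K m →ₗ⁅K⁆ K)

lemma epsA_pi (x : FreeLieAlgebra K (Fin m)) : epsA K m (piA K m x) = 0 := by
  show epsA K m (UniversalEnvelopingAlgebra.ι K (gmk K m x)) = 0
  rw [epsA, UniversalEnvelopingAlgebra.lift_ι_apply]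
  rfl

/-- the split square-zero extension of `UA` by the bimodule `MM` (right action through `epsA`). -/
def Mag := UA K m × MM K m

noncomputable instance : AddCommGroup (Mag K m) := inferInstanceAs (AddCommGroup (_ × _))
noncomputable instance : Module K (Mag K m) := inferInstanceAs (Module K (_ × _))

noncomputable instance : Mul (Mag K m) :=
  ⟨fun p q => (p.1 * q.1, p.1 • q.2 + epsA K m q.1 • p.2)⟩
noncomputable instance : One (Mag K m) := ⟨(1, 0)⟩

lemma mag_mul_def (p q : Mag K m) :
    p * q = (p.1 * q.1, p.1 • q.2 + epsA K m q.1 • p.2) := rfl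

lemma mag_fst (p q : Mag K m) : (p * q).1 = p.1 * q.1 := rfl
lemma mag_add_fst (p q : Mag K m) : (p + q).1 = p.1 + q.1 := rfl
lemma mag_add_snd (p q : Mag K m) : (p + q).2 = p.2 + q.2 := rfl
lemma mag_snd (p q : Mag K m) : (p * q).2 = p.1 • q.2 + epsA K m q.1 • p.2 := rfl

noncomputable instance : Ring (Mag K m) :=
  { (inferInstance : AddCommGroup (Mag K m)), (inferInstance : Mul (Mag K m)),
    (inferInstance : One (Mag K m)) with
    mul_assoc := by
      intro a b c
      refine Prod.ext (mul_assoc _ _ _) ?_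
      simp only [mag_snd, mag_fst, smul_add, mul_smul, map_mul]
      rw [smul_comm (epsA K m c.1) a.1 b.2, smul_comm (epsA K m c.1) (epsA K m b.1) a.2]
      abel
    one_mul := by
      intro a
      refine Prod.ext (one_mul _) ?_
      simp only [mag_snd]
      show (1 : UA K m) • a.2 + epsA K m a.1 • (0 : MM K m) = a.2
      simp
    mul_one := by
      intro a
      refine Prod.ext (mul_one _) ?_
      simp only [mag_snd]
      show a.1 • (0 : MM K m) + epsA K m 1 • a.2 = a.2
      simp
    left_distrib := by
      intro a b c
      refine Prod.ext (mul_add _ _ _) ?_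
      simp only [mag_snd, mag_add_fst, mag_add_snd, smul_add, map_add, add_smul]
      abel
    right_distrib := by
      intro a b c
      refine Prod.ext (add_mul _ _ _) ?_
      simp only [mag_snd, mag_add_fst, mag_add_snd, smul_add, map_add, add_smul]
      abel
    zero_mul := by
      intro a
      refine Prod.ext (zero_mul _) ?_
      show (0 : UA K m) • a.2 + epsA K m a.1 • (0 : MM K m) = 0
      simp
    mul_zero := by
      intro a
      refine Prod.ext (mul_zero _) ?_
      show a.1 • (0 : MM K m) + epsA K m 0 • a.2 = 0
      simp }

noncomputable instance : Algebra K (Mag K m) :=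
  Algebra.ofModule
    (by
      intro k p q
      refine Prod.ext ?_ ?_
      · show (k • p.1) * q.1 = k • (p.1 * q.1)
        rw [smul_mul_assoc]
      · show (k • p.1) • q.2 + epsA K m q.1 • (k • p.2) = k • (p.1 • q.2 + epsA K m q.1 • p.2)
        rw [smul_assoc, smul_comm (epsA K m q.1) k p.2, smul_add])
    (by
      intro k p q
      refine Prod.ext ?_ ?_
      · show p.1 * (k • q.1) = k • (p.1 * q.1)
        rw [mul_smul_comm]
      · show p.1 • (k • q.2) + epsA K m (k • q.1) • p.2 = k • (p.1 • q.2 + epsA K m q.1 • p.2)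
        rw [smul_comm p.1 k q.2, map_smul, smul_eq_mul, mul_smul, smul_add])

noncomputable def theta : FreeLieAlgebra K (Fin m) →ₗ⁅K⁆ Mag K m :=
  FreeLieAlgebra.lift K (fun i => ((gElem K m i, Finsupp.single i 1) : Mag K m))

noncomputable def magFst : Mag K m →ₐ[K] UA K m where
  toFun p := p.1
  map_one' := rfl
  map_mul' p q := rfl
  map_zero' := rfl
  map_add' p q := rfl
  commutes' k := by
    show (k • (1 : Mag K m)).1 = algebraMap K (UA K m) k
    show k • (1 : UA K m) = _
    rw [Algebra.algebraMap_eq_smul_one]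

lemma theta_fst (x : FreeLieAlgebra K (Fin m)) : (theta K m x).1 = piA K m x := by
  have h : ((magFst K m).toLieHom.comp (theta K m) : _ →ₗ⁅K⁆ _) = piA K m := by
    apply FreeLieAlgebra.hom_ext
    intro i
    show (theta K m (FreeLieAlgebra.of K i)).1 = piA K m (FreeLieAlgebra.of K i)
    exact congrArg Prod.fst (FreeLieAlgebra.lift_of_apply (R := K) (L := Mag K m)
      (fun i => ((gElem K m i, Finsupp.single i 1) : Mag K m)) i)
  exact LieHom.congr_fun h x

noncomputable def magSnd : Mag K m →ₗ[K] MM K m where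
  toFun p := p.2
  map_add' p q := rfl
  map_smul' k p := rfl

noncomputable def Phi : FreeLieAlgebra K (Fin m) →ₗ[K] MM K m :=
  (magSnd K m).comp (theta K m).toLinearMap

lemma Phi_apply (x : FreeLieAlgebra K (Fin m)) : Phi K m x = (theta K m x).2 := rfl

lemma Phi_of (i : Fin m) : Phi K m (FreeLieAlgebra.of K i) = Finsupp.single i 1 := by
  rw [Phi_apply]
  exact congrArg Prod.snd (FreeLieAlgebra.lift_of_apply (R := K) (L := Mag K m)
    (fun i => ((gElem K m i, Finsupp.single i 1) : Mag K m)) i)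

lemma Phi_bracket (x y : FreeLieAlgebra K (Fin m)) :
    Phi K m ⁅x, y⁆ = piA K m x • Phi K m y - piA K m y • Phi K m x := by
  rw [Phi_apply, LieHom.map_lie, Ring.lie_def]
  show (theta K m x * theta K m y).2 - (theta K m y * theta K m x).2 = _
  rw [mag_snd, mag_snd, theta_fst, theta_fst, epsA_pi, epsA_pi]
  simp only [zero_smul, add_zero]
  rfl

lemma Phi_rho (k : Fin (m - 1)) :
    Phi K m (pathRho K m k)
      = Finsupp.single (bIdx k) (gElem K m (aIdx k))
        - Finsupp.single (aIdx k) (gElem K m (bIdx k)) := by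
  rw [pathRho, Phi_bracket, Phi_of, Phi_of]
  show gElem K m (aIdx k) • _ - gElem K m (bIdx k) • _ = _
  rw [Finsupp.smul_single, Finsupp.smul_single, smul_eq_mul, smul_eq_mul, mul_one, mul_one]

end Magnus
end PathSF

namespace PathSF
section ModPart

variable (K : Type*) [CommRing K] (m : ℕ)

lemma uea_induction {R : Type*} [CommRing R] {L : Type*} [LieRing L] [LieAlgebra R L]
    {p : UniversalEnvelopingAlgebra R L → Prop}
    (halg : ∀ r : R, p (algebraMap R (UniversalEnvelopingAlgebra R L) r))
    (hgen : ∀ x : L, p (UniversalEnvelopingAlgebra.ι R x))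
    (hmul : ∀ a b, p a → p b → p (a * b))
    (hadd : ∀ a b, p a → p b → p (a + b)) (u : UniversalEnvelopingAlgebra R L) : p u := by
  obtain ⟨t, rfl⟩ := (RingCon.mkₐ_surjective (α := R) (UniversalEnvelopingAlgebra.ringCon R L) :
    Function.Surjective (UniversalEnvelopingAlgebra.mkAlgHom R L)) u
  induction t using TensorAlgebra.induction with
  | algebraMap r => rw [AlgHom.commutes]; exact halg r
  | ι x =>
    have h : (UniversalEnvelopingAlgebra.mkAlgHom R L) (TensorAlgebra.ι R x)
        = UniversalEnvelopingAlgebra.ι R x := rfl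
    exact hgen x
  | mul a b ha hb => rw [map_mul]; exact hmul _ _ ha hb
  | add a b ha hb => rw [map_add]; exact hadd _ _ ha hb

abbrev Ab := LieIdealAb K (FreeLieAlgebra K (Fin m)) (RI K m)

noncomputable def mkAb : ↥(RI K m) → Ab K m :=
  LieSubmodule.Quotient.mk (N := derivedLieSubmodule K (FreeLieAlgebra K (Fin m)) (RI K m))

lemma smul_def_Ab (u : UA K m) (ξ : Ab K m) :
    u • ξ = (UniversalEnvelopingAlgebra.lift K
      (abelianizationAction K (FreeLieAlgebra K (Fin m)) (RI K m)) u) ξ := rfl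

lemma smul_mkAb (x : FreeLieAlgebra K (Fin m)) (r : RI K m) :
    piA K m x • mkAb K m r = mkAb K m ⁅x, r⁆ := by
  rw [smul_def_Ab]
  show (UniversalEnvelopingAlgebra.lift K
      (abelianizationAction K (FreeLieAlgebra K (Fin m)) (RI K m))
      (UniversalEnvelopingAlgebra.ι K (gmk K m x))) (mkAb K m r) = _
  rw [UniversalEnvelopingAlgebra.lift_ι_apply]
  show (Submodule.liftQ (RI K m).toSubmodule
      (LieModule.toEnd K (FreeLieAlgebra K (Fin m)) (Ab K m)).toLinearMap _)
      (Submodule.Quotient.mk x) (mkAb K m r) = _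
  show ⁅x, mkAb K m r⁆ = mkAb K m ⁅x, r⁆
  rfl

lemma algebraMap_smul_Ab (r : K) (ξ : Ab K m) :
    algebraMap K (UA K m) r • ξ = r • ξ := by
  rw [smul_def_Ab, AlgHom.commutes]
  exact Module.algebraMap_end_apply K K (Ab K m) r ξ

noncomputable def PhiR : ↥(RI K m) →ₗ[K] MM K m :=
  (Phi K m).comp (RI K m).toSubmodule.subtype

lemma PhiR_apply (r : RI K m) : PhiR K m r = Phi K m (r : FreeLieAlgebra K (Fin m)) := rfl

lemma piA_mem {r : FreeLieAlgebra K (Fin m)} (hr : r ∈ RI K m) : piA K m r = 0 := by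
  show UniversalEnvelopingAlgebra.ι K (gmk K m r) = 0
  have h : gmk K m r = 0 := by
    rw [gmk_apply, LieSubmodule.Quotient.mk_eq_zero']
    exact hr
  rw [h]
  exact map_zero _

lemma PhiR_bracket (x : FreeLieAlgebra K (Fin m)) (r : RI K m) :
    PhiR K m ⁅x, r⁆ = piA K m x • PhiR K m r := by
  rw [PhiR_apply, PhiR_apply, LieSubmodule.coe_bracket, Phi_bracket, piA_mem K m r.2,
    zero_smul, sub_zero]

noncomputable def PhiKer : LieSubmodule K (FreeLieAlgebra K (Fin m)) ↥(RI K m) :=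
  { LinearMap.ker (PhiR K m) with
    lie_mem := by
      intro x r hr
      have hr' : PhiR K m r = 0 := hr
      show PhiR K m ⁅x, r⁆ = 0
      rw [PhiR_bracket, hr', smul_zero] }

lemma derived_le_PhiKer :
    derivedLieSubmodule K (FreeLieAlgebra K (Fin m)) (RI K m) ≤ PhiKer K m := by
  rw [derivedLieSubmodule, LieSubmodule.lieSpan_le]
  rintro z ⟨x, y, hz⟩
  show PhiR K m z = 0
  rw [PhiR_apply, hz, Phi_bracket, piA_mem K m x.2, piA_mem K m y.2, zero_smul,
    zero_smul, sub_zero]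

noncomputable def phiAb : Ab K m →ₗ[K] MM K m :=
  Submodule.liftQ
    (derivedLieSubmodule K (FreeLieAlgebra K (Fin m)) (RI K m)).toSubmodule
    (PhiR K m)
    (fun z hz => by
      have h1 : z ∈ derivedLieSubmodule K (FreeLieAlgebra K (Fin m)) (RI K m) := hz
      exact derived_le_PhiKer K m h1)

lemma phiAb_mk (r : RI K m) : phiAb K m (mkAb K m r) = PhiR K m r := rfl

lemma phiAb_smul (u : UA K m) (ξ : Ab K m) : phiAb K m (u • ξ) = u • phiAb K m ξ := by
  revert ξ
  induction u using uea_induction with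
  | halg r =>
    intro ξ
    rw [algebraMap_smul_Ab, map_smul, algebraMap_smul]
  | hgen x =>
    intro ξ
    obtain ⟨x, rfl⟩ := Submodule.Quotient.mk_surjective (RI K m).toSubmodule x
    obtain ⟨r, rfl⟩ := Submodule.Quotient.mk_surjective
      (derivedLieSubmodule K (FreeLieAlgebra K (Fin m)) (RI K m)).toSubmodule ξ
    have h1 : (UniversalEnvelopingAlgebra.ι K (Submodule.Quotient.mk x) : UA K m)
        = piA K m x := rfl
    have h2 : (Submodule.Quotient.mk r : Ab K m) = mkAb K m r := rfl
    rw [h1, h2, smul_mkAb, phiAb_mk, phiAb_mk, PhiR_bracket]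
  | hmul a b ha hb =>
    intro ξ
    rw [mul_smul, ha, hb, mul_smul]
  | hadd a b ha hb =>
    intro ξ
    rw [add_smul, map_add, ha, hb, add_smul]

noncomputable def rhoMem (k : Fin (m - 1)) : ↥(RI K m) :=
  ⟨pathRho K m k, LieSubmodule.subset_lieSpan (Set.mem_range_self k)⟩

noncomputable def rhoAb (k : Fin (m - 1)) : Ab K m := mkAb K m (rhoMem K m k)

noncomputable def psi : (Fin (m - 1) →₀ UA K m) →ₗ[UA K m] Ab K m :=
  Finsupp.linearCombination (UA K m) (rhoAb K m)

noncomputable def vVec (k : Fin (m - 1)) : MM K m :=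
  Finsupp.single (bIdx k) (gElem K m (aIdx k))
    - Finsupp.single (aIdx k) (gElem K m (bIdx k))

lemma phiAb_rhoAb (k : Fin (m - 1)) : phiAb K m (rhoAb K m k) = vVec K m k := by
  rw [rhoAb, phiAb_mk, PhiR_apply, rhoMem, vVec]
  exact Phi_rho K m k

lemma phiAb_psi (f : Fin (m - 1) →₀ UA K m) :
    phiAb K m (psi K m f) = Finsupp.linearCombination (UA K m) (vVec K m) f := by
  induction f using Finsupp.induction with
  | zero => rw [map_zero, map_zero, map_zero]
  | single_add k u f _ _ ih =>
    rw [map_add, map_add, map_add, ih]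
    congr 1
    rw [psi, Finsupp.linearCombination_single, Finsupp.linearCombination_single,
      phiAb_smul, phiAb_rhoAb]

instance : IsScalarTower K (UA K m) (Ab K m) :=
  ⟨fun k u ξ => by
    rw [smul_def_Ab, smul_def_Ab, map_smul]
    exact LinearMap.smul_apply _ _ _⟩

noncomputable def Wsub : LieSubmodule K (FreeLieAlgebra K (Fin m)) ↥(RI K m) where
  toSubmodule := Submodule.comap
      (LieSubmodule.Quotient.mk' (derivedLieSubmodule K (FreeLieAlgebra K (Fin m)) (RI K m))).toLinearMap
      (Submodule.restrictScalars K (LinearMap.range (psi K m)))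
  lie_mem := by
      intro x r hr
      have hr' : mkAb K m r ∈ LinearMap.range (psi K m) := hr
      show mkAb K m ⁅x, r⁆ ∈ LinearMap.range (psi K m)
      obtain ⟨f, hf⟩ := hr'
      refine ⟨piA K m x • f, ?_⟩
      rw [map_smul, hf, smul_mkAb]

lemma mem_range_psi (r : ↥(RI K m)) : mkAb K m r ∈ LinearMap.range (psi K m) := by
  have hle : RI K m ≤ LieSubmodule.map (LieSubmodule.incl (RI K m)) (Wsub K m) := by
    rw [LieSubmodule.lieSpan_le]
    rintro z ⟨k, rfl⟩
    rw [SetLike.mem_coe, LieSubmodule.mem_map]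
    refine ⟨rhoMem K m k, ?_, rfl⟩
    show mkAb K m (rhoMem K m k) ∈ LinearMap.range (psi K m)
    exact ⟨Finsupp.single k 1, by rw [psi, Finsupp.linearCombination_single, one_smul, rhoAb]⟩
  have h2 := hle r.2
  rw [LieSubmodule.mem_map] at h2
  obtain ⟨r', hr', heq⟩ := h2
  have hrr : r' = r := Subtype.ext heq
  rw [← hrr]
  exact hr'

lemma psi_surj : Function.Surjective (psi K m) := by
  intro ξ
  obtain ⟨r, rfl⟩ := Submodule.Quotient.mk_surjective
    (derivedLieSubmodule K (FreeLieAlgebra K (Fin m)) (RI K m)).toSubmodule ξ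
  obtain ⟨f, hf⟩ := mem_range_psi K m r
  exact ⟨f, hf⟩

lemma vVec_apply_a (k' k : Fin (m - 1)) :
    vVec K m k' (aIdx k)
      = (if (k' : ℕ) + 1 = (k : ℕ) then gElem K m (aIdx k') else 0)
        - (if k' = k then gElem K m (bIdx k') else 0) := by
  have h1 : (bIdx k' = aIdx k) ↔ ((k' : ℕ) + 1 = (k : ℕ)) := by
    simp [bIdx, aIdx, Fin.ext_iff]
  have h2 : (aIdx k' = aIdx (m := m) k) ↔ (k' = k) := by
    simp [aIdx, Fin.ext_iff]
  simp only [vVec, Finsupp.sub_apply, Finsupp.single_apply, h1, h2]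

lemma lin_indep (f : Fin (m - 1) →₀ UA K m)
    (hf : Finsupp.linearCombination (UA K m) (vVec K m) f = 0) : f = 0 := by
  have key : ∀ n : ℕ, ∀ k : Fin (m - 1), (k : ℕ) = n → f k = 0 := by
    intro n
    induction n using Nat.strong_induction_on with
    | _ n IH =>
      intro k hk
      have h0 : (Finsupp.linearCombination (UA K m) (vVec K m) f) (aIdx k) = 0 := by
        rw [hf]; rfl
      rw [Finsupp.linearCombination_apply, Finsupp.sum_fintype] at h0
      swap
      · intro i; rw [zero_smul]
      rw [Finsupp.finset_sum_apply] at h0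
      simp only [Finsupp.smul_apply, smul_eq_mul, vVec_apply_a] at h0
      have hterm : ∀ i ∈ Finset.univ, i ≠ k →
          f i * ((if (i : ℕ) + 1 = (k : ℕ) then gElem K m (aIdx i) else 0)
            - (if i = k then gElem K m (bIdx i) else 0)) = 0 := by
        intro i _ hik
        rw [if_neg hik]
        by_cases hib : (i : ℕ) + 1 = (k : ℕ)
        · have hfi : f i = 0 := IH i (by omega) i rfl
          rw [hfi, zero_mul]
        · rw [if_neg hib, sub_zero, mul_zero]
      rw [Finset.sum_eq_single k hterm (fun hmem => absurd (Finset.mem_univ k) hmem)] at h0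
      rw [if_neg (by omega), if_pos rfl, zero_sub, mul_neg, neg_eq_zero] at h0
      exact g_reg K m (bIdx k) (f k) h0
  ext k
  rw [key (k : ℕ) k rfl]
  rfl

lemma psi_inj : Function.Injective (psi K m) := by
  intro f g h
  have h2 : psi K m (f - g) = 0 := by rw [map_sub, h, sub_self]
  have h3 : Finsupp.linearCombination (UA K m) (vVec K m) (f - g) = 0 := by
    rw [← phiAb_psi, h2, map_zero]
  exact sub_eq_zero.mp (lin_indep K m _ h3)

end ModPart

end PathSF


/-- Let `K` be a commutative ring and `m ≥ 2`.  In the free Lie algebra over `K` on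
`ξ₁,…,ξ_m`, the path sequence `ρ₁ = [ξ₁,ξ₂], ρ₂ = [ξ₂,ξ₃], …, ρ_{m−1} = [ξ_{m−1},ξ_m]`
is strongly free. -/
theorem path_strongly_free (K : Type*) [CommRing K] (m : ℕ) (hm : 2 ≤ m)
    (ρ : Fin (m - 1) → FreeLieAlgebra K (Fin m))
    (hρ : ∀ k : Fin (m - 1),
      ρ k = ⁅FreeLieAlgebra.of K (Fin.cast (show m - 1 + 1 = m by omega) k.castSucc),
             FreeLieAlgebra.of K (Fin.cast (show m - 1 + 1 = m by omega) k.succ)⁆) :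
    IsStronglyFree K (FreeLieAlgebra K (Fin m)) ρ := by
  have hρeq : ρ = PathSF.pathRho K m := by
    funext k
    rw [hρ k]
    rfl
  subst hρeq
  constructor
  · exact PathSF.torsion_UA K m
  · have hbij : Function.Bijective (PathSF.psi K m) :=
      ⟨PathSF.psi_inj K m, PathSF.psi_surj K m⟩
    refine ⟨Module.Basis.ofRepr (LinearEquiv.ofBijective (PathSF.psi K m) hbij).symm, ?_⟩
    intro k
    rw [Module.Basis.coe_ofRepr]
    simp only [LinearEquiv.symm_symm]
    show (LinearEquiv.ofBijective (PathSF.psi K m) hbij) (Finsupp.single k 1) = _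
    show PathSF.psi K m (Finsupp.single k 1) = _
    rw [PathSF.psi, Finsupp.linearCombination_single, one_smul, PathSF.rhoAb]
    rfl
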